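/- arXiv:1805.00512 — 6 statements merged into one kernel-verified Lean document; each statement's English description precedes it below -/
import Mathlib

section
/- If a cone C is sequentially complete (every non-decreasing sequence in the unit ball has a least upper bound in the unit ball), then every non-increasing sequence (xₙ) in C has a greatest lower bound. -/
class PCone (C : Type*) extends AddCommMonoid C, Module NNReal C where
  cnorm : C → NNReal
  add_left_cancel' : ∀ x y y' : C, x + y = x + y' → y = y'
  cnorm_smul : ∀ (a : NNReal) (x : C), cnorm (a • x) = a * cnorm x
  cnorm_add_le : ∀ x y : C, cnorm (x + y) ≤ cnorm x + cnorm y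
  cnorm_eq_zero : ∀ x : C, cnorm x = 0 → x = 0
  cnorm_le_add : ∀ x y : C, cnorm x ≤ cnorm (x + y)

/-- The cone order: `x ≤ y` iff `y = x + z` for some `z`. -/
def cle {C : Type*} [PCone C] (x y : C) : Prop := ∃ z : C, y = x + z

/-- `b` is an upper bound of `s` for the cone order. -/
def IsUBc {C : Type*} [PCone C] (s : Set C) (b : C) : Prop := ∀ a ∈ s, cle a b

/-- `j` is a least upper bound of `s` for the cone order. -/
def IsLUBc {C : Type*} [PCone C] (s : Set C) (j : C) : Prop :=
  IsUBc s j ∧ ∀ b, IsUBc s b → cle j b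

/-- `b` is a lower bound of `s` for the cone order. -/
def IsLBc {C : Type*} [PCone C] (s : Set C) (b : C) : Prop := ∀ a ∈ s, cle b a

/-- `g` is a greatest lower bound of `s` for the cone order. -/
def IsGLBc {C : Type*} [PCone C] (s : Set C) (g : C) : Prop :=
  IsLBc s g ∧ ∀ b, IsLBc s b → cle b g

/-- `D` is directed for the cone order. -/
def DirC {C : Type*} [PCone C] (D : Set C) : Prop :=
  D.Nonempty ∧ ∀ x ∈ D, ∀ y ∈ D, ∃ z ∈ D, cle x z ∧ cle y z

/-- `D` is directed for the reverse cone order. -/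
def RevDirC {C : Type*} [PCone C] (D : Set C) : Prop :=
  D.Nonempty ∧ ∀ x ∈ D, ∀ y ∈ D, ∃ z ∈ D, cle z x ∧ cle z y


lemma pcone_cancel {C : Type*} [PCone C] {x y y' : C} (h : x + y = x + y') : y = y' :=
  PCone.add_left_cancel' x y y' h


/-- If a cone is sequentially complete (every non-decreasing sequence in the unit
ball has a least upper bound in the unit ball), then every non-increasing sequence
has a greatest lower bound. -/
theorem seq_complete_has_infs {C : Type*} [PCone C]
    (hsc : ∀ x : ℕ → C, (∀ n, cle (x n) (x (n + 1))) →
      (∀ n, PCone.cnorm (x n) ≤ 1) →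
      ∃ s : C, PCone.cnorm s ≤ 1 ∧ IsLUBc (Set.range x) s) :
    ∀ x : ℕ → C, (∀ n, cle (x (n + 1)) (x n)) →
      ∃ g : C, IsGLBc (Set.range x) g := by
  intro x hmono
  have hylex : ∀ n, cle (x n) (x 0) := by
    intro n
    induction n with
    | zero => exact ⟨0, by simp⟩
    | succ n ih =>
      obtain ⟨a, ha⟩ := ih
      obtain ⟨b, hb⟩ := hmono n
      exact ⟨b + a, by rw [ha, hb, add_assoc]⟩
  choose y hy using hylex
  by_cases h0 : PCone.cnorm (x 0) = 0
  · have hx0 : x 0 = 0 := PCone.cnorm_eq_zero _ h0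
    refine ⟨0, ?_, ?_⟩
    · rintro a ⟨n, rfl⟩
      have hle : PCone.cnorm (x n) ≤ PCone.cnorm (x 0) := by
        rw [hy n]; exact PCone.cnorm_le_add _ _
      rw [h0] at hle
      have : x n = 0 := PCone.cnorm_eq_zero _ (le_antisymm hle bot_le)
      exact ⟨0, by simp [this]⟩
    · intro b hb
      have := hb (x 0) ⟨0, rfl⟩
      rwa [hx0] at this
  · set N := PCone.cnorm (x 0) with hN
    have hNinv : N⁻¹ * N = 1 := inv_mul_cancel₀ h0
    have hNN : N * N⁻¹ = 1 := mul_inv_cancel₀ h0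
    set w : ℕ → C := fun n => N⁻¹ • y n with hw
    have hyw : ∀ n, N • w n = y n := by
      intro n; rw [hw]; simp only []; rw [smul_smul, hNN, one_smul]
    have hwmono : ∀ n, cle (w n) (w (n + 1)) := by
      intro n
      obtain ⟨b, hb⟩ := hmono n
      have hyy : y (n + 1) = y n + b := by
        apply pcone_cancel (x := x (n + 1))
        rw [← hy (n + 1), hy n, hb, add_assoc, add_comm b (y n), ← add_assoc, add_assoc]
      exact ⟨N⁻¹ • b, by rw [hw]; simp only []; rw [hyy, smul_add]⟩
    have hwball : ∀ n, PCone.cnorm (w n) ≤ 1 := by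
      intro n
      have h1 : PCone.cnorm (y n) ≤ N := by
        rw [hN, hy n, add_comm]; exact PCone.cnorm_le_add _ _
      rw [hw]; simp only []
      rw [PCone.cnorm_smul]
      calc N⁻¹ * PCone.cnorm (y n) ≤ N⁻¹ * N := mul_le_mul_right h1 _
        _ = 1 := hNinv
    obtain ⟨s, -, hsub, hslub⟩ := hsc w hwmono hwball
    have hub : IsUBc (Set.range w) (N⁻¹ • x 0) := by
      rintro a ⟨n, rfl⟩
      refine ⟨N⁻¹ • x n, ?_⟩
      rw [hw]; simp only []
      rw [← smul_add, add_comm (y n) (x n), ← hy n]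
    obtain ⟨t, ht⟩ := hslub _ hub
    refine ⟨N • t, ?_, ?_⟩
    have hx0eq : x 0 = N • s + N • t := by
      have := congrArg (fun z => N • z) ht
      simp only [smul_add, smul_smul, hNN, one_smul] at this
      exact this
    · rintro a ⟨n, rfl⟩
      obtain ⟨u, hu⟩ := hsub (w n) ⟨n, rfl⟩
      refine ⟨N • u, ?_⟩
      apply pcone_cancel (x := y n)
      calc y n + x n = x 0 := by rw [add_comm, ← hy n]
        _ = N • (w n + u) + N • t := by rw [← hu, hx0eq]
        _ = y n + (N • t + N • u) := by
            rw [smul_add, hyw n]; ac_rfl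
        _ = _ := rfl
    · intro b hb
      choose v hv using fun n => hb (x n) ⟨n, rfl⟩
      have hc : ∀ n, v 0 = y n + v n := by
        intro n
        apply pcone_cancel (x := b)
        rw [← hv 0, hy n, hv n, add_assoc, add_comm (v n) (y n), ← add_assoc, add_assoc]
      have hub2 : IsUBc (Set.range w) (N⁻¹ • v 0) := by
        rintro a ⟨n, rfl⟩
        exact ⟨N⁻¹ • v n, by rw [hw]; simp only []; rw [← smul_add, ← hc n]⟩
      obtain ⟨r, hr⟩ := hslub _ hub2
      refine ⟨N • r, ?_⟩
      apply pcone_cancel (x := N • s)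
      have hv0 : v 0 = N • s + N • r := by
        have := congrArg (fun z => N • z) hr
        simp only [smul_add, smul_smul, hNN, one_smul] at this
        exact this
      have hx0eq : x 0 = N • s + N • t := by
        have := congrArg (fun z => N • z) ht
        simp only [smul_add, smul_smul, hNN, one_smul] at this
        exact this
      calc N • s + N • t = x 0 := hx0eq.symm
        _ = b + (N • s + N • r) := by rw [hv 0, hv0]
        _ = N • s + (b + N • r) := by rw [← add_assoc, add_comm b (N • s), add_assoc]
end

section
/- If a cone C is directed complete (every directed subset of the unit ball has a least upper bound in the unit ball), then every subset D of C that is directed for the reverse order has a greatest lower bound. -/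
lemma cle_smul {C : Type*} [PCone C] (a : NNReal) {x y : C} (h : cle x y) :
    cle (a • x) (a • y) := by
  obtain ⟨z, hz⟩ := h
  exact ⟨a • z, by rw [hz, smul_add]⟩

lemma cnorm_zero {C : Type*} [PCone C] : PCone.cnorm (0 : C) = 0 := by
  have := PCone.cnorm_smul (0 : NNReal) (0 : C)
  simpa using this

/-- If a cone is directed complete (every directed subset of the unit ball has a
least upper bound in the unit ball), then every reverse-directed subset has a
greatest lower bound. -/
theorem directed_complete_has_infs {C : Type*} [PCone C]
    (hdc : ∀ D : Set C, (∀ x ∈ D, PCone.cnorm x ≤ 1) → DirC D →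
      ∃ s : C, PCone.cnorm s ≤ 1 ∧ IsLUBc D s) :
    ∀ D : Set C, RevDirC D → ∃ g : C, IsGLBc D g := by
  intro D hD
  obtain ⟨⟨x₀, hx₀⟩, hdir⟩ := hD
  have cancel : ∀ x y y' : C, x + y = x + y' → y = y' := PCone.add_left_cancel'
  by_cases hc : PCone.cnorm x₀ = 0
  · -- x₀ = 0, so 0 is the glb
    have hx0 : x₀ = 0 := PCone.cnorm_eq_zero _ hc
    refine ⟨0, fun a _ => ⟨a, (zero_add a).symm⟩, fun b hb => ?_⟩
    obtain ⟨z, hz⟩ := hb x₀ hx₀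
    rw [hx0] at hz
    have hb0 : PCone.cnorm b = 0 := le_antisymm (by
      calc PCone.cnorm b ≤ PCone.cnorm (b + z) := PCone.cnorm_le_add b z
        _ = PCone.cnorm (0 : C) := by rw [← hz]
        _ = 0 := cnorm_zero) zero_le
    exact ⟨0, by rw [PCone.cnorm_eq_zero _ hb0, add_zero]⟩
  · set c : NNReal := PCone.cnorm x₀ with hcdef
    set S : Set C := {z | ∃ d ∈ D, x₀ = d + z} with hSdef
    have hSne : (0 : C) ∈ S := ⟨x₀, hx₀, (add_zero x₀).symm⟩
    have hSnorm : ∀ z ∈ S, PCone.cnorm z ≤ c := by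
      rintro z ⟨d, _, hd⟩
      calc PCone.cnorm z ≤ PCone.cnorm (z + d) := PCone.cnorm_le_add z d
        _ = c := by rw [add_comm, ← hd]
    have hSdir : ∀ z ∈ S, ∀ z' ∈ S, ∃ w ∈ S, cle z w ∧ cle z' w := by
      rintro z ⟨d, hd, hdz⟩ z' ⟨d', hd', hdz'⟩
      obtain ⟨e, he, ⟨u, hu⟩, ⟨u', hu'⟩⟩ := hdir d hd d' hd'
      refine ⟨u + z, ⟨e, he, by rw [hdz, hu, add_assoc]⟩, ⟨u, by rw [add_comm]⟩, ?_⟩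
      have h1 : e + (u' + z') = e + (u + z) := by
        rw [← add_assoc, ← add_assoc, ← hu, ← hu', ← hdz, ← hdz']
      exact ⟨u', by rw [← cancel e _ _ h1, add_comm]⟩
    -- scaled set
    set S' : Set C := (fun z => c⁻¹ • z) '' S with hS'def
    have hS'norm : ∀ x ∈ S', PCone.cnorm x ≤ 1 := by
      rintro x ⟨z, hz, rfl⟩
      rw [PCone.cnorm_smul]
      calc c⁻¹ * PCone.cnorm z ≤ c⁻¹ * c := mul_le_mul_right (hSnorm z hz) _
        _ = 1 := inv_mul_cancel₀ hc
    have hS'dir : DirC S' := by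
      refine ⟨⟨c⁻¹ • 0, 0, hSne, rfl⟩, ?_⟩
      rintro x ⟨z, hz, rfl⟩ y ⟨z', hz', rfl⟩
      obtain ⟨w, hw, h1, h2⟩ := hSdir z hz z' hz'
      exact ⟨c⁻¹ • w, ⟨w, hw, rfl⟩, cle_smul _ h1, cle_smul _ h2⟩
    obtain ⟨s, _, hsub, hslub⟩ := hdc S' hS'norm hS'dir
    set s₀ : C := c • s with hs₀def
    have hsmul_inv : ∀ z : C, c • c⁻¹ • z = z := fun z => by
      rw [smul_smul, mul_inv_cancel₀ hc, one_smul]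
    have hinv_smul : ∀ z : C, c⁻¹ • c • z = z := fun z => by
      rw [smul_smul, inv_mul_cancel₀ hc, one_smul]
    have hub : ∀ z ∈ S, cle z s₀ := by
      intro z hz
      have := cle_smul c (hsub _ ⟨z, hz, rfl⟩)
      rwa [hsmul_inv] at this
    have hlub : ∀ b, (∀ z ∈ S, cle z b) → cle s₀ b := by
      intro b hb
      have hub' : IsUBc S' (c⁻¹ • b) := by
        rintro x ⟨z, hz, rfl⟩
        exact cle_smul _ (hb z hz)
      have := cle_smul c (hslub _ hub')
      rwa [hsmul_inv] at this
    -- s₀ ≤ x₀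
    obtain ⟨g, hg⟩ : cle s₀ x₀ := hlub x₀ (by rintro z ⟨d, _, hd⟩; exact ⟨d, by rw [hd, add_comm]⟩)
    refine ⟨g, ?_, ?_⟩
    · -- g is a lower bound
      intro d hd
      obtain ⟨e, he, ⟨u, hu⟩, ⟨v, hv⟩⟩ := hdir x₀ hx₀ d hd
      have huS : u ∈ S := ⟨e, he, hu⟩
      obtain ⟨w, hw⟩ := hub u huS
      have h1 : u + e = u + (w + g) := by
        rw [add_comm u e, ← hu, hg, hw, add_assoc]
      have h2 : e = w + g := cancel u _ _ h1
      exact ⟨w + v, by rw [hv, h2, add_comm w g, add_assoc]⟩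
    · -- g is greatest
      intro b hb
      obtain ⟨v, hv⟩ := hb x₀ hx₀
      have hvub : ∀ z ∈ S, cle z v := by
        rintro z ⟨d, hd, hdz⟩
        obtain ⟨u, hu⟩ := hb d hd
        have h1 : b + v = b + (u + z) := by rw [← hv, hdz, hu, add_assoc]
        exact ⟨u, by rw [cancel b _ _ h1, add_comm]⟩
      obtain ⟨w, hw⟩ := hlub v hvub
      have h1 : s₀ + g = s₀ + (b + w) := by
        rw [← hg, hv, hw, ← add_assoc, add_comm b s₀, add_assoc]
      exact ⟨w, cancel s₀ _ _ h1⟩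
end

section
/- In a directed-complete cone, addition is Scott-continuous: for any directed subsets D and E of C, sup{x + y : x ∈ D, y ∈ E} = sup D + sup E. -/
/-- In a directed-complete cone, addition is Scott-continuous:
`sup {x + y : x ∈ D, y ∈ E} = sup D + sup E` for directed `D`, `E`. -/
theorem add_scott_continuous {C : Type*} [PCone C]
    (hdc : ∀ D : Set C, (∀ x ∈ D, PCone.cnorm x ≤ 1) → DirC D →
      ∃ s : C, PCone.cnorm s ≤ 1 ∧ IsLUBc D s)
    (D E : Set C) (hD : DirC D) (hE : DirC E)
    (sD sE : C) (hsD : IsLUBc D sD) (hsE : IsLUBc E sE) :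
    IsLUBc {w : C | ∃ x ∈ D, ∃ y ∈ E, w = x + y} (sD + sE) := by
  constructor
  · rintro w ⟨x, hx, y, hy, rfl⟩
    obtain ⟨z1, hz1⟩ := hsD.1 x hx
    obtain ⟨z2, hz2⟩ := hsE.1 y hy
    exact ⟨z1 + z2, by rw [hz1, hz2]; abel⟩
  · intro b hb
    obtain ⟨x0, hx0⟩ := hD.1
    obtain ⟨y0, hy0⟩ := hE.1
    have key : ∀ y ∈ E, cle (sD + y) b := by
      intro y hy
      obtain ⟨c, hc⟩ := hb (x0 + y) ⟨x0, hx0, y, hy, rfl⟩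
      have hub : ∀ x ∈ D, cle x (x0 + c) := by
        intro x hx
        obtain ⟨z, hz⟩ := hb (x + y) ⟨x, hx, y, hy, rfl⟩
        have h : y + (x0 + c) = y + (x + z) := by
          have h1 : y + (x0 + c) = b := by rw [hc]; abel
          have h2 : y + (x + z) = b := by rw [hz]; abel
          rw [h1, h2]
        exact ⟨z, PCone.add_left_cancel' y _ _ h⟩
      obtain ⟨z, hz⟩ := hsD.2 (x0 + c) hub
      refine ⟨z, ?_⟩
      have : b = y + (x0 + c) := by rw [hc]; abel
      rw [this, hz]; abel
    obtain ⟨c, hc⟩ := key y0 hy0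
    have hub : ∀ y ∈ E, cle y (y0 + c) := by
      intro y hy
      obtain ⟨z, hz⟩ := key y hy
      have h : sD + (y0 + c) = sD + (y + z) := by
        have h1 : sD + (y0 + c) = b := by rw [hc]; abel
        have h2 : sD + (y + z) = b := by rw [hz]; abel
        rw [h1, h2]
      exact ⟨z, PCone.add_left_cancel' sD _ _ h⟩
    obtain ⟨z, hz⟩ := hsE.2 (y0 + c) hub
    refine ⟨z, ?_⟩
    have : b = sD + (y0 + c) := by rw [hc]; abel
    rw [this, hz]; abel
end

section
/- In a lattice cone C, for every x ∈ C the set of partitions of x (finite multisets [u₁,…,uₙ] with x = u₁ + ⋯ + uₙ) is directed for the refinement order: any two partitions of x have a common refinement. -/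
/-- `π₂` refines `π₁`: `π₂` is obtained by splitting each element of `π₁` into a
partition of it, i.e. there is a multiset `A` of multisets whose elementwise sums
give `π₁` and whose total union is `π₂`. -/
def Refines {C : Type*} [PCone C] (π₁ π₂ : Multiset C) : Prop :=
  ∃ A : Multiset (Multiset C), A.map Multiset.sum = π₁ ∧ A.sum = π₂

section Aux
variable {C : Type*} [PCone C]

lemma cadd_cancel {x u v : C} (h : x + u = x + v) : u = v :=
  PCone.add_left_cancel' x u v h

lemma ccnorm_zero : PCone.cnorm (0 : C) = 0 := by
  have := PCone.cnorm_smul (0 : NNReal) (0 : C)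
  simpa using this

lemma ceq_zero_of_add_eq_zero {x y : C} (h : x + y = 0) : x = 0 := by
  apply PCone.cnorm_eq_zero
  have h1 := PCone.cnorm_le_add x y
  rw [h, ccnorm_zero] at h1
  exact le_antisymm h1 zero_le

lemma meet_stuff (hlat : ∀ x y : C, ∃ j : C, IsLUBc {x, y} j) (x y : C) :
    ∃ j m : C, x + y = j + m ∧ cle x j ∧ cle y j ∧
      (∀ b, cle x b → cle y b → cle j b) ∧ cle m x ∧ cle m y ∧
      (∀ b, cle b x → cle b y → cle b m) := by
  obtain ⟨j, hj⟩ := hlat x y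
  have hxj : cle x j := hj.1 x (Set.mem_insert _ _)
  have hyj : cle y j := hj.1 y (Set.mem_insert_of_mem _ rfl)
  have hlub : ∀ b, cle x b → cle y b → cle j b := by
    intro b hxb hyb
    refine hj.2 b ?_
    intro a ha
    rcases ha with rfl | ha
    · exact hxb
    · rcases ha with rfl; exact hyb
  have hjxy : cle j (x + y) := hlub _ ⟨y, rfl⟩ ⟨x, add_comm x y⟩
  have hxj2 := hxj
  have hyj2 := hyj
  obtain ⟨m, hm⟩ := hjxy
  -- m ≤ x
  obtain ⟨z, hz⟩ := hyj2
  have hmx : cle m x := by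
    have : y + x = y + (z + m) := by
      calc y + x = x + y := add_comm _ _
        _ = j + m := hm
        _ = (y + z) + m := by rw [hz]
        _ = y + (z + m) := by abel
    exact ⟨z, by rw [cadd_cancel this, add_comm]⟩
  obtain ⟨w, hw⟩ := hxj2
  have hmy : cle m y := by
    have : x + y = x + (w + m) := by
      calc x + y = j + m := hm
        _ = (x + w) + m := by rw [hw]
        _ = x + (w + m) := by abel
    exact ⟨w, by rw [cadd_cancel this, add_comm]⟩
  refine ⟨j, m, hm, hxj, hyj, hlub, hmx, hmy, ?_⟩
  intro b hbx hby
  obtain ⟨x', hx'⟩ := hbx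
  obtain ⟨y', hy'⟩ := hby
  obtain ⟨j', hj'⟩ := hlat x' y'
  have hx'j : cle x' j' := hj'.1 x' (Set.mem_insert _ _)
  have hy'j : cle y' j' := hj'.1 y' (Set.mem_insert_of_mem _ rfl)
  have hj'xy : cle j' (x' + y') := by
    refine hj'.2 _ ?_
    intro a ha
    rcases ha with rfl | ha
    · exact ⟨y', rfl⟩
    · rcases ha with rfl; exact ⟨x', add_comm _ _⟩
  obtain ⟨r, hr⟩ := hj'xy
  have hub : cle j (b + j') := by
    refine hlub _ ?_ ?_
    · obtain ⟨u, hu⟩ := hx'j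
      exact ⟨u, by rw [hx', hu, add_assoc]⟩
    · obtain ⟨u, hu⟩ := hy'j
      exact ⟨u, by rw [hy', hu, add_assoc]⟩
  obtain ⟨t, ht⟩ := hub
  have key : j + m = j + (b + (t + r)) := by
    calc j + m = x + y := hm.symm
      _ = (b + x') + (b + y') := by rw [hx', hy']
      _ = (b + b) + (x' + y') := by abel
      _ = (b + b) + (j' + r) := by rw [hr]
      _ = b + (b + j') + r := by abel
      _ = b + (j + t) + r := by rw [ht]
      _ = j + (b + (t + r)) := by abel
  exact ⟨t + r, cadd_cancel key⟩

lemma cle_of_disj (hlat : ∀ x y : C, ∃ j : C, IsLUBc {x, y} j) {w z b : C}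
    (hd : ∀ t, cle t z → cle t w → t = 0) (h : cle w (z + b)) : cle w b := by
  obtain ⟨j, m, hm, hwj, hbj, hlub, -, -, -⟩ := meet_stuff hlat w b
  have hjzb : cle j (z + b) := hlub _ h ⟨z, add_comm _ _⟩
  obtain ⟨t, ht⟩ := hjzb
  obtain ⟨w₂, hw₂⟩ := hbj
  have hwz : cle w₂ z := by
    have : b + z = b + (w₂ + t) := by
      calc b + z = z + b := add_comm _ _
        _ = j + t := ht
        _ = (b + w₂) + t := by rw [hw₂]
        _ = b + (w₂ + t) := by abel
    exact ⟨t, by rw [cadd_cancel this]⟩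
  have hww : cle w₂ w := by
    have : b + w = b + (w₂ + m) := by
      calc b + w = w + b := add_comm _ _
        _ = j + m := hm
        _ = (b + w₂) + m := by rw [hw₂]
        _ = b + (w₂ + m) := by abel
    exact ⟨m, by rw [cadd_cancel this]⟩
  have hz0 : w₂ = 0 := hd w₂ hwz hww
  have hjb : j = b := by rw [hw₂, hz0, add_zero]
  obtain ⟨u, hu⟩ := hwj
  exact ⟨u, by rw [← hjb, hu]⟩

lemma criesz (hlat : ∀ x y : C, ∃ j : C, IsLUBc {x, y} j) {a b c d : C}
    (h : a + b = c + d) :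
    ∃ e f g k : C, a = e + f ∧ c = e + g ∧ b = g + k ∧ d = f + k := by
  obtain ⟨j, m, hm, -, -, -, hma, hmc, hglb⟩ := meet_stuff hlat a c
  obtain ⟨f, hf⟩ := hma
  obtain ⟨g, hg⟩ := hmc
  have hfb : f + b = g + d := by
    apply cadd_cancel (x := m)
    calc m + (f + b) = (m + f) + b := by abel
      _ = a + b := by rw [← hf]
      _ = c + d := h
      _ = (m + g) + d := by rw [hg]
      _ = m + (g + d) := by abel
  have hd : ∀ t, cle t f → cle t g → t = 0 := by
    intro t htf htg
    have h1 : cle (m + t) a := by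
      obtain ⟨u, hu⟩ := htf
      exact ⟨u, by rw [hf, hu]; abel⟩
    have h2 : cle (m + t) c := by
      obtain ⟨u, hu⟩ := htg
      exact ⟨u, by rw [hg, hu]; abel⟩
    obtain ⟨s, hs⟩ := hglb _ h1 h2
    rw [add_assoc] at hs
    have : m + 0 = m + (t + s) := by rw [add_zero]; exact hs
    exact ceq_zero_of_add_eq_zero (cadd_cancel this).symm
  have hgb : cle g b := cle_of_disj hlat hd ⟨d, hfb⟩
  obtain ⟨k, hk⟩ := hgb
  refine ⟨m, f, g, k, hf, hg, hk, ?_⟩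
  apply cadd_cancel (x := g)
  calc g + d = f + b := hfb.symm
    _ = f + (g + k) := by rw [hk]
    _ = g + (f + k) := by abel

/-- Riesz splitting of a multiset partition. -/
lemma csplit (hlat : ∀ x y : C, ∃ j : C, IsLUBc {x, y} j) :
    ∀ (π : Multiset C) (u s : C), u + s = π.sum →
    ∃ ρ : Multiset (C × C), ρ.map (fun p => p.1 + p.2) = π ∧
      (ρ.map Prod.fst).sum = u ∧ (ρ.map Prod.snd).sum = s := by
  intro π
  induction π using Multiset.induction_on with
  | empty =>
    intro u s h
    rw [Multiset.sum_zero] at h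
    refine ⟨0, by simp, by simp [ceq_zero_of_add_eq_zero h], ?_⟩
    rw [add_comm] at h
    simp [ceq_zero_of_add_eq_zero h]
  | cons v π ih =>
    intro u s h
    rw [Multiset.sum_cons] at h
    obtain ⟨e, f, g, k, he, hv, hs, hps⟩ := criesz hlat h
    obtain ⟨ρ', h1, h2, h3⟩ := ih f k hps.symm
    refine ⟨(e, g) ::ₘ ρ', ?_, ?_, ?_⟩
    · simp [Multiset.map_cons, h1, ← hv]
    · simp [Multiset.map_cons, h2, ← he]
    · simp [Multiset.map_cons, h3, ← hs]

lemma pairing {α β γ : Type*} (f : α → γ) (g : β → γ) :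
    ∀ (s : Multiset α) (t : Multiset β), s.map f = t.map g →
    ∃ r : Multiset (α × β), r.map Prod.fst = s ∧ r.map Prod.snd = t ∧
      ∀ p ∈ r, f p.1 = g p.2 := by
  classical
  intro s
  induction s using Multiset.induction_on with
  | empty =>
    intro t h
    have : t = 0 := by
      simpa using (Multiset.map_eq_zero.mp h.symm)
    exact ⟨0, by simp, by simp [this], by simp⟩
  | cons a s ih =>
    intro t h
    have hmem : f a ∈ t.map g := by rw [← h]; simp
    obtain ⟨b, hb, hgb⟩ := Multiset.mem_map.mp hmem
    have ht : t = b ::ₘ t.erase b := (Multiset.cons_erase hb).symm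
    rw [ht] at h
    rw [Multiset.map_cons, Multiset.map_cons, ← hgb] at h
    have h' : s.map f = (t.erase b).map g := (Multiset.cons_inj_right _).mp h
    obtain ⟨r, hr1, hr2, hr3⟩ := ih (t.erase b) h'
    refine ⟨(a, b) ::ₘ r, by simp [hr1], by simp [hr2, ← ht], ?_⟩
    intro p hp
    rcases Multiset.mem_cons.mp hp with rfl | hp
    · exact hgb.symm
    · exact hr3 p hp

end Aux

section Main2
variable {C : Type*} [PCone C]

lemma key (hlat : ∀ x y : C, ∃ j : C, IsLUBc {x, y} j) :
    ∀ (π₁ π₂ : Multiset C), π₁.sum = π₂.sum →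
      ∃ π : Multiset C, Refines π₁ π ∧ Refines π₂ π := by
  classical
  intro π₁
  induction π₁ using Multiset.induction_on with
  | empty =>
    intro π₂ h
    rw [Multiset.sum_zero] at h
    refine ⟨0, ⟨0, by simp⟩, ⟨π₂.map (fun _ => (0 : Multiset C)), ?_, by simp⟩⟩
    rw [Multiset.map_map]
    have hz : ∀ u ∈ π₂, (Multiset.sum ∘ fun _ => (0 : Multiset C)) u = id u := by
      intro u hu
      have he : π₂ = u ::ₘ π₂.erase u := (Multiset.cons_erase hu).symm
      rw [he, Multiset.sum_cons] at h
      simpa using (ceq_zero_of_add_eq_zero h.symm).symm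
    rw [Multiset.map_congr rfl hz, Multiset.map_id]
  | cons a t ih =>
    intro π₂ h
    rw [Multiset.sum_cons] at h
    obtain ⟨ρ, hρ, hfst, hsnd⟩ := csplit hlat π₂ a t.sum h
    obtain ⟨π', ⟨At, hAt1, hAt2⟩, ⟨A', hA'1, hA'2⟩⟩ := ih (ρ.map Prod.snd) hsnd.symm
    obtain ⟨r, hr1, hr2, hr3⟩ := pairing Multiset.sum Prod.snd A' ρ hA'1
    refine ⟨ρ.map Prod.fst + π', ⟨(ρ.map Prod.fst) ::ₘ At, ?_, ?_⟩, ?_⟩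
    · rw [Multiset.map_cons, hAt1, hfst]
    · rw [Multiset.sum_cons, hAt2]
    · -- Refines π₂
      refine ⟨r.map (fun p => p.2.1 ::ₘ p.1), ?_, ?_⟩
      · rw [Multiset.map_map, ← hρ]
        have : ∀ p ∈ r, (Multiset.sum ∘ fun p => p.2.1 ::ₘ p.1) p
            = ((fun q => q.1 + q.2) ∘ Prod.snd) p := by
          intro p hp
          simp [Multiset.sum_cons, hr3 p hp]
        rw [Multiset.map_congr rfl this, ← Multiset.map_map, hr2]
      · have hsplit : ∀ p : Multiset C × (C × C),
            p.2.1 ::ₘ p.1 = ({p.2.1} : Multiset C) + p.1 := by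
          intro p; simp [Multiset.singleton_add]
        rw [Multiset.map_congr rfl (fun p _ => hsplit p), Multiset.sum_map_add]
        congr 1
        · have : r.map (fun p => ({p.2.1} : Multiset C))
              = (r.map (fun p => p.2.1)).map (fun a => ({a} : Multiset C)) := by
            simp [Multiset.map_map]
          rw [this, Multiset.sum_map_singleton]
          rw [show (fun p : Multiset C × C × C => p.2.1) = (Prod.fst ∘ Prod.snd) from rfl,
            ← Multiset.map_map, hr2]
        · rw [hr1, hA'2]

lemma sum_sum (A : Multiset (Multiset C)) : A.sum.sum = (A.map Multiset.sum).sum := by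
  induction A using Multiset.induction_on with
  | empty => simp
  | cons a A ih => simp [Multiset.sum_cons, ih]

lemma sum_of_refines {π π' : Multiset C} (h : Refines π π') : π'.sum = π.sum := by
  obtain ⟨A, h1, h2⟩ := h
  rw [← h1, ← h2, sum_sum]

end Main2

/-- In a lattice cone, the partitions of any element `x` (finite multisets summing
to `x`) are directed for the refinement order: any two partitions of `x` have a
common refinement. -/
theorem partitions_directed {C : Type*} [PCone C]
    (hlat : ∀ x y : C, ∃ j : C, IsLUBc {x, y} j) :
    ∀ (x : C) (π₁ π₂ : Multiset C), π₁.sum = x → π₂.sum = x →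
      ∃ π : Multiset C, π.sum = x ∧ Refines π₁ π ∧ Refines π₂ π := by
  intro x π₁ π₂ h1 h2
  obtain ⟨π, r1, r2⟩ := key hlat π₁ π₂ (h1.trans h2.symm)
  exact ⟨π, by rw [sum_of_refines r1, h1], r1, r2⟩
end

section
/- For every probabilistic coherence space X, the cone F(X) associated to X is a directed-complete lattice cone: every directed subset of the unit ball has a supremum in the unit ball, and any two elements have a least upper bound given by the pointwise maximum. -/
open scoped ENNReal NNReal

/-- The dual of a set of `ℝ≥0`-valued vectors on a web `A`:
`P⊥ = {u : ∀ v ∈ P, Σₐ uₐ vₐ ≤ 1}`. -/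
def dualSet {A : Type*} (P : Set (A → ℝ≥0)) : Set (A → ℝ≥0) :=
  {u | ∀ v ∈ P, (∑' a : A, (u a : ℝ≥0∞) * (v a : ℝ≥0∞)) ≤ 1}

/-- A probabilistic coherence space on a countable web `A`. -/
structure PCS (A : Type*) [Countable A] where
  P : Set (A → ℝ≥0)
  bidual : dualSet (dualSet P) = P
  cover : ∀ a : A, ∃ u ∈ P, 0 < u a ∧ ∀ b : A, b ≠ a → u b = 0
  bdd : ∀ a : A, ∃ M : ℝ≥0, ∀ u ∈ P, u a ≤ M

/-- The cone associated to a PCS: all non-negative multiples of cliques. -/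
def coneSet {A : Type*} [Countable A] (X : PCS A) : Set (A → ℝ≥0) :=
  {w | ∃ (α : ℝ≥0) (x : A → ℝ≥0), x ∈ X.P ∧ w = α • x}

/-- The norm of the cone associated to a PCS: `‖w‖ = inf {1/r : r • w ∈ P(X), r > 0}`. -/
noncomputable def cnormP {A : Type*} [Countable A] (X : PCS A) (w : A → ℝ≥0) : ℝ≥0∞ :=
  sInf {q : ℝ≥0∞ | ∃ r : ℝ≥0, 0 < r ∧ r • w ∈ X.P ∧ q = (r : ℝ≥0∞)⁻¹}

/-- The cone order on the cone of a PCS: `x ≤ y` iff `y = x + z` for some `z` in the cone. -/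
def cleP {A : Type*} [Countable A] (X : PCS A) (x y : A → ℝ≥0) : Prop :=
  ∃ z ∈ coneSet X, y = x + z

/-- `b` is an upper bound for `s` in the cone order of the PCS `X`. -/
def IsUBp {A : Type*} [Countable A] (X : PCS A) (s : Set (A → ℝ≥0)) (b : A → ℝ≥0) : Prop :=
  ∀ w ∈ s, cleP X w b

/-- `j` is a least upper bound for `s` in the cone order of the PCS `X`. -/
def IsLUBp {A : Type*} [Countable A] (X : PCS A) (s : Set (A → ℝ≥0)) (j : A → ℝ≥0) : Prop :=
  IsUBp X s j ∧ ∀ b, IsUBp X s b → cleP X j b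

section Aux

variable {A : Type*} [Countable A] (X : PCS A)

lemma pcs_pair {u v : A → ℝ≥0} (hu : u ∈ X.P) (hv : v ∈ dualSet X.P) :
    (∑' a : A, (u a : ℝ≥0∞) * (v a : ℝ≥0∞)) ≤ 1 := by
  rw [tsum_congr fun a => mul_comm ((u a : ℝ≥0∞)) ((v a : ℝ≥0∞))]
  exact hv u hu

lemma pcs_down {u u' : A → ℝ≥0} (hle : ∀ a, u' a ≤ u a) (hu : u ∈ X.P) : u' ∈ X.P := by
  rw [← X.bidual]
  intro v hv
  refine le_trans (ENNReal.tsum_le_tsum fun a => ?_) (pcs_pair X hu hv)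
  exact mul_le_mul_left (ENNReal.coe_le_coe.2 (hle a)) _

lemma pcs_convex {u v : A → ℝ≥0} (t : ℝ≥0) (ht : t ≤ 1) (hu : u ∈ X.P) (hv : v ∈ X.P) :
    (fun a => t * u a + (1 - t) * v a) ∈ X.P := by
  rw [← X.bidual]
  intro w hw
  have h1 : ((1 - t : ℝ≥0) : ℝ≥0∞) + (t : ℝ≥0∞) = 1 := by
    rw [← ENNReal.coe_add, tsub_add_cancel_of_le ht, ENNReal.coe_one]
  calc (∑' a : A, (((t * u a + (1 - t) * v a : ℝ≥0)) : ℝ≥0∞) * (w a : ℝ≥0∞))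
      = ∑' a : A, ((t : ℝ≥0∞) * ((u a : ℝ≥0∞) * w a) + ((1 - t : ℝ≥0) : ℝ≥0∞) * ((v a : ℝ≥0∞) * w a)) := by
        congr 1; funext a; push_cast; ring
    _ = (t : ℝ≥0∞) * (∑' a : A, (u a : ℝ≥0∞) * w a) + ((1 - t : ℝ≥0) : ℝ≥0∞) * (∑' a : A, (v a : ℝ≥0∞) * w a) := by
        rw [ENNReal.tsum_add, ENNReal.tsum_mul_left, ENNReal.tsum_mul_left]
    _ ≤ (t : ℝ≥0∞) * 1 + ((1 - t : ℝ≥0) : ℝ≥0∞) * 1 := by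
        gcongr
        exacts [pcs_pair X hu hw, pcs_pair X hv hw]
    _ = 1 := by rw [mul_one, mul_one, add_comm, h1]

lemma pcs_sub_cone {x : A → ℝ≥0} (hx : x ∈ X.P) : x ∈ coneSet X :=
  ⟨1, x, hx, by funext a; simp⟩

lemma cone_down {w w' : A → ℝ≥0} (hle : ∀ a, w' a ≤ w a) (hw : w ∈ coneSet X) :
    w' ∈ coneSet X := by
  obtain ⟨α, x, hx, rfl⟩ := hw
  rcases eq_or_ne α 0 with rfl | hα
  · have : w' = 0 := by
      funext a
      exact le_antisymm (by simpa using hle a) (zero_le)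
    exact ⟨0, x, hx, by rw [this]; funext a; simp⟩
  · refine ⟨α, α⁻¹ • w', pcs_down X (fun a => ?_) hx, ?_⟩
    · have h := hle a
      simp only [Pi.smul_apply, smul_eq_mul] at h ⊢
      calc α⁻¹ * w' a ≤ α⁻¹ * (α * x a) := by gcongr
        _ = x a := by rw [← mul_assoc, inv_mul_cancel₀ hα, one_mul]
    · funext a
      simp only [Pi.smul_apply, smul_eq_mul]
      rw [← mul_assoc, mul_inv_cancel₀ hα, one_mul]

lemma cone_add {w z : A → ℝ≥0} (hw : w ∈ coneSet X) (hz : z ∈ coneSet X) :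
    w + z ∈ coneSet X := by
  obtain ⟨α, x, hx, rfl⟩ := hw
  obtain ⟨β, y, hy, rfl⟩ := hz
  rcases eq_or_ne (α + β) 0 with hγ | hγ
  · obtain ⟨h1, h2⟩ := add_eq_zero.mp hγ
    exact ⟨0, x, hx, by rw [h1, h2]; simp⟩
  · have hγ' : (0 : ℝ≥0) < α + β := pos_iff_ne_zero.mpr hγ
    have ht : α / (α + β) ≤ 1 := by
      rw [div_le_one hγ']; exact le_add_right le_rfl
    have hts : (1 : ℝ≥0) - α / (α + β) = β / (α + β) := by
      have : β / (α + β) + α / (α + β) = 1 := by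
        rw [← add_div, add_comm β α, div_self hγ]
      exact (eq_tsub_of_add_eq this).symm
    refine ⟨α + β, _, pcs_convex X (α / (α + β)) ht hx hy, ?_⟩
    funext a
    simp only [Pi.add_apply, Pi.smul_apply, smul_eq_mul, hts]
    rw [mul_add, ← mul_assoc, ← mul_assoc, mul_div_cancel₀ _ hγ, mul_div_cancel₀ _ hγ]

lemma cleP_le {x y : A → ℝ≥0} (h : cleP X x y) : ∀ a, x a ≤ y a := by
  obtain ⟨z, _, rfl⟩ := h
  exact fun a => le_self_add

lemma cleP_of_le {x y : A → ℝ≥0} (hy : y ∈ coneSet X) (h : ∀ a, x a ≤ y a) :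
    cleP X x y := by
  refine ⟨fun a => y a - x a, cone_down X (fun a => tsub_le_self) hy, ?_⟩
  funext a
  exact (add_tsub_cancel_of_le (h a)).symm

lemma tsum_sup_le_one {ι : Type*} (f : ι → A → ℝ≥0∞)
    (hdir : ∀ i j, ∃ k, ∀ a, f i a ≤ f k a ∧ f j a ≤ f k a)
    (hb : ∀ i, (∑' a : A, f i a) ≤ 1) :
    (∑' a : A, ⨆ i, f i a) ≤ 1 := by
  rw [ENNReal.tsum_eq_iSup_sum]
  refine iSup_le fun F => ?_
  rw [ENNReal.finsetSum_iSup (f := fun a i => f i a)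
    (fun i j => (hdir i j).imp fun k hk a => hk a)]
  exact iSup_le fun i => le_trans (ENNReal.sum_le_tsum F) (hb i)

end Aux

/-- The cone of a PCS is a directed-complete lattice cone: every directed subset of
the unit ball `P(X)` has a supremum in `P(X)`, and any two elements of the cone have
a least upper bound given by the pointwise maximum. -/
theorem pcs_cone_directed_complete_lattice {A : Type*} [Countable A] (X : PCS A) :
    (∀ D : Set (A → ℝ≥0), D ⊆ X.P → D.Nonempty →
      (∀ x ∈ D, ∀ y ∈ D, ∃ z ∈ D, cleP X x z ∧ cleP X y z) →
      ∃ s ∈ X.P, IsLUBp X D s) ∧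
    (∀ x ∈ coneSet X, ∀ y ∈ coneSet X,
      (fun a => max (x a) (y a)) ∈ coneSet X ∧
      IsLUBp X {x, y} (fun a => max (x a) (y a))) := by
  unfold IsLUBp IsUBp
  constructor
  · intro D hDP hne hdir
    haveI : Nonempty D := hne.to_subtype
    have hBdd : ∀ a : A, BddAbove (Set.range fun w : D => (w : A → ℝ≥0) a) := by
      intro a
      obtain ⟨M, hM⟩ := X.bdd a
      refine ⟨M, ?_⟩
      rintro r ⟨w, rfl⟩
      exact hM _ (hDP w.2)
    set s : A → ℝ≥0 := fun a => ⨆ w : D, (w : A → ℝ≥0) a with hs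
    have hcoe : ∀ a : A, ((s a : ℝ≥0∞)) = ⨆ w : D, ((w : A → ℝ≥0) a : ℝ≥0∞) := by
      intro a
      rw [hs]
      exact ENNReal.coe_iSup (hBdd a)
    have hdir' : ∀ w₁ w₂ : D, ∃ w₃ : D,
        ∀ a, (w₁ : A → ℝ≥0) a ≤ (w₃ : A → ℝ≥0) a ∧ (w₂ : A → ℝ≥0) a ≤ (w₃ : A → ℝ≥0) a := by
      intro w₁ w₂
      obtain ⟨z, hz, h1, h2⟩ := hdir w₁ w₁.2 w₂ w₂.2
      exact ⟨⟨z, hz⟩, fun a => ⟨cleP_le X h1 a, cleP_le X h2 a⟩⟩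
    have hsP : s ∈ X.P := by
      rw [← X.bidual]
      intro v hv
      have : (∑' a : A, (s a : ℝ≥0∞) * (v a : ℝ≥0∞))
          = ∑' a : A, ⨆ w : D, ((w : A → ℝ≥0) a : ℝ≥0∞) * (v a : ℝ≥0∞) := by
        refine tsum_congr fun a => ?_
        rw [hcoe a, ENNReal.iSup_mul]
      rw [this]
      refine tsum_sup_le_one (fun w : D => fun a => ((w : A → ℝ≥0) a : ℝ≥0∞) * (v a : ℝ≥0∞))
        ?_ ?_
      · intro i j
        obtain ⟨k, hk⟩ := hdir' i j
        exact ⟨k, fun a => ⟨mul_le_mul_left (ENNReal.coe_le_coe.2 (hk a).1) _,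
          mul_le_mul_left (ENNReal.coe_le_coe.2 (hk a).2) _⟩⟩
      · exact fun w => pcs_pair X (hDP w.2) hv
    refine ⟨s, hsP, ?_, ?_⟩
    · intro w hw
      refine cleP_of_le X (pcs_sub_cone X hsP) fun a => ?_
      exact le_ciSup (hBdd a) (⟨w, hw⟩ : D)
    · intro b hb
      have hbcone : b ∈ coneSet X := by
        obtain ⟨w₀, hw₀⟩ := hne
        obtain ⟨z, hz, rfl⟩ := hb w₀ hw₀
        exact cone_add X (pcs_sub_cone X (hDP hw₀)) hz
      refine cleP_of_le X hbcone fun a => ?_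
      exact ciSup_le fun w => cleP_le X (hb w w.2) a
  · intro x hx y hy
    have hm : (fun a => max (x a) (y a)) ∈ coneSet X := by
      refine cone_down X (fun a => ?_) (cone_add X hx hy)
      exact max_le le_self_add le_add_self
    refine ⟨hm, ?_, ?_⟩
    · intro w hw
      rcases hw with rfl | rfl
      · exact cleP_of_le X hm fun a => le_max_left _ _
      · exact cleP_of_le X hm fun a => le_max_right _ _
    · intro b hb
      have hxb := hb x (Set.mem_insert _ _)
      have hyb := hb y (Set.mem_insert_of_mem _ rfl)
      have hbcone : b ∈ coneSet X := by
        obtain ⟨z, hz, rfl⟩ := hxb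
        exact cone_add X hx hz
      exact cleP_of_le X hbcone fun a => max_le (cleP_le X hxb a) (cleP_le X hyb a)
end

section
/- Let X, Y be probabilistic coherence spaces and f ∈ ℝ≥0^{Mfin(|X|) × |Y|} a matrix indexed by finite multisets over |X| and elements of |Y|, such that for all x ∈ P(X), the vector (f·x!)_b = Σ_μ f_{μ,b}·x^μ lies in P(Y). Then the induced map x ↦ f·x! from P(X) to P(Y) is pre-stable: for every n, every x and u₁,…,uₙ with x + Σuᵢ ∈ P(X), the alternating sum Σ_{I ⊆ {1..n}} (−1)^{n−|I|} f·(x + Σ_{i∈I} uᵢ)! is non-negative in every coordinate. -/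
open scoped ENNReal NNReal

/-- The application of a matrix `f ∈ ℝ≥0^{Mfin(A) × B}` to the promotion `x!` of
`x : A → ℝ≥0`:  `(f · x!)_b = Σ_μ f_{μ,b} · x^μ` where `x^μ = ∏_{a ∈ μ} x_a`. -/
noncomputable def appF {A B : Type*} (f : Multiset A → B → ℝ≥0)
    (x : A → ℝ≥0) (b : B) : ℝ≥0∞ :=
  ∑' μ : Multiset A, (f μ b : ℝ≥0∞) * (((μ.map x).prod : ℝ≥0) : ℝ≥0∞)

namespace PrestableAux

variable {n : ℕ}

/-- Functions on subsets representable as non-negative combinations of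
"upper indicator" functions `I ↦ [S ⊆ I]`. -/
def Rep (n : ℕ) (h : Finset (Fin n) → ℝ≥0) : Prop :=
  ∃ c : Finset (Fin n) → ℝ≥0,
    ∀ I, h I = ∑ S : Finset (Fin n), c S * (if S ⊆ I then 1 else 0)

lemma rep_const (r : ℝ≥0) : Rep n (fun _ => r) := by
  refine ⟨fun S => if S = ∅ then r else 0, fun I => ?_⟩
  rw [Finset.sum_eq_single (∅ : Finset (Fin n))]
  · simp
  · intro S _ hS; simp [hS]
  · simp

lemma rep_add {h₁ h₂ : Finset (Fin n) → ℝ≥0} (H₁ : Rep n h₁) (H₂ : Rep n h₂) :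
    Rep n (fun I => h₁ I + h₂ I) := by
  obtain ⟨c₁, hc₁⟩ := H₁; obtain ⟨c₂, hc₂⟩ := H₂
  refine ⟨fun S => c₁ S + c₂ S, fun I => ?_⟩
  show h₁ I + h₂ I = _
  rw [hc₁, hc₂, ← Finset.sum_add_distrib]
  exact Finset.sum_congr rfl fun S _ => (add_mul _ _ _).symm

lemma rep_mul {h₁ h₂ : Finset (Fin n) → ℝ≥0} (H₁ : Rep n h₁) (H₂ : Rep n h₂) :
    Rep n (fun I => h₁ I * h₂ I) := by
  classical
  obtain ⟨c₁, hc₁⟩ := H₁; obtain ⟨c₂, hc₂⟩ := H₂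
  refine ⟨fun W => ∑ p : Finset (Fin n) × Finset (Fin n),
      if p.1 ∪ p.2 = W then c₁ p.1 * c₂ p.2 else 0, fun I => ?_⟩
  show h₁ I * h₂ I = _
  calc h₁ I * h₂ I
      = ∑ p : Finset (Fin n) × Finset (Fin n),
          (c₁ p.1 * if p.1 ⊆ I then 1 else 0) * (c₂ p.2 * if p.2 ⊆ I then 1 else 0) := by
        rw [hc₁, hc₂, Finset.sum_mul_sum, ← Finset.sum_product', Finset.univ_product_univ]
    _ = ∑ p : Finset (Fin n) × Finset (Fin n),
          (c₁ p.1 * c₂ p.2) * (if p.1 ∪ p.2 ⊆ I then 1 else 0) := by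
        refine Finset.sum_congr rfl fun p _ => ?_
        by_cases h1 : p.1 ⊆ I <;> by_cases h2 : p.2 ⊆ I <;>
          simp [h1, h2, Finset.union_subset_iff, mul_comm, mul_assoc, mul_left_comm]
    _ = ∑ p : Finset (Fin n) × Finset (Fin n), ∑ W : Finset (Fin n),
          (if p.1 ∪ p.2 = W then c₁ p.1 * c₂ p.2 else 0) * (if W ⊆ I then 1 else 0) := by
        refine Finset.sum_congr rfl fun p _ => ?_
        rw [Finset.sum_eq_single (p.1 ∪ p.2)]
        · simp
        · intro W _ hW; simp [Ne.symm hW]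
        · simp
    _ = ∑ W : Finset (Fin n), ∑ p : Finset (Fin n) × Finset (Fin n),
          (if p.1 ∪ p.2 = W then c₁ p.1 * c₂ p.2 else 0) * (if W ⊆ I then 1 else 0) :=
        Finset.sum_comm
    _ = _ := by
        refine Finset.sum_congr rfl fun W _ => ?_
        rw [Finset.sum_mul]

lemma rep_single (i : Fin n) (r : ℝ≥0) : Rep n (fun I => if i ∈ I then r else 0) := by
  refine ⟨fun S => if S = {i} then r else 0, fun I => ?_⟩
  rw [Finset.sum_eq_single ({i} : Finset (Fin n))]
  · by_cases h : i ∈ I <;> simp [h, Finset.singleton_subset_iff]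
  · intro S _ hS; simp [hS]
  · simp

lemma rep_sum {ι : Type*} (s : Finset ι) (g : ι → Finset (Fin n) → ℝ≥0)
    (hg : ∀ i ∈ s, Rep n (g i)) : Rep n (fun I => ∑ i ∈ s, g i I) := by
  classical
  induction s using Finset.induction with
  | empty => simpa using rep_const (0 : ℝ≥0)
  | @insert a s ha ih =>
    simp only [Finset.sum_insert ha]
    exact rep_add (hg a (Finset.mem_insert_self a s))
      (ih fun i hi => hg i (Finset.mem_insert_of_mem hi))

lemma rep_monomial {A : Type*} (x : A → ℝ≥0) (u : Fin n → A → ℝ≥0) (μ : Multiset A) :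
    Rep n (fun I => ((μ.map fun a => x a + ∑ i ∈ I, u i a).prod)) := by
  induction μ using Multiset.induction with
  | empty => simpa using rep_const (1 : ℝ≥0)
  | cons a μ ih =>
    simp only [Multiset.map_cons, Multiset.prod_cons]
    refine rep_mul ?_ ih
    have h : ∀ I : Finset (Fin n), x a + ∑ i ∈ I, u i a
        = x a + ∑ i : Fin n, (if i ∈ I then u i a else 0) := by
      intro I
      rw [Finset.sum_ite_mem, Finset.univ_inter]
    simp only [h]
    exact rep_add (rep_const _) (rep_sum _ _ fun i _ => rep_single i (u i a))

lemma card_parity (S : Finset (Fin n)) :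
    (Finset.univ.filter fun I : Finset (Fin n) => ((n - I.card) % 2 = 1) ∧ S ⊆ I).card ≤
    (Finset.univ.filter fun I : Finset (Fin n) => ((n - I.card) % 2 = 0) ∧ S ⊆ I).card := by
  by_cases hS : S = Finset.univ
  · subst hS
    have : (Finset.univ.filter fun I : Finset (Fin n) =>
        ((n - I.card) % 2 = 1) ∧ Finset.univ ⊆ I) = ∅ := by
      rw [Finset.filter_eq_empty_iff]
      rintro I - ⟨hp, hsub⟩
      have hI : I = Finset.univ := Finset.univ_subset_iff.mp hsub
      subst hI
      simp [Finset.card_univ] at hp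
    rw [this, Finset.card_empty]
    exact Nat.zero_le _
  · obtain ⟨i₀, hi₀⟩ : ∃ i, i ∉ S := by
      by_contra h; push_neg at h; exact hS (Finset.eq_univ_iff_forall.mpr h)
    set σ : Finset (Fin n) → Finset (Fin n) :=
      fun I => if i₀ ∈ I then I.erase i₀ else insert i₀ I with hσ
    have hinv : ∀ I, σ (σ I) = I := by
      intro I
      by_cases h : i₀ ∈ I
      · simp [hσ, h, Finset.insert_erase h]
      · simp [hσ, h, Finset.erase_insert h]
    apply Finset.card_le_card_of_injOn σ
    · intro I hI
      simp only [Finset.mem_coe, Finset.mem_filter, Finset.mem_univ, true_and] at hI ⊢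
      obtain ⟨hp, hsub⟩ := hI
      have hcard : I.card ≤ n := by
        simpa using Finset.card_le_univ I
      by_cases h : i₀ ∈ I
      · have h1 : 1 ≤ I.card := Finset.card_pos.mpr ⟨i₀, h⟩
        refine ⟨?_, ?_⟩
        · rw [hσ]; simp only [h, if_true, Finset.card_erase_of_mem h]
          omega
        · rw [hσ]; simp only [h, if_true]
          exact Finset.subset_erase.mpr ⟨hsub, fun hc => hi₀ hc⟩
      · have hne : I ≠ Finset.univ := fun hc => h (hc ▸ Finset.mem_univ i₀)
        have hlt : I.card < n := by
          have := Finset.card_lt_card (Finset.ssubset_univ_iff.mpr hne)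
          simpa using this
        refine ⟨?_, ?_⟩
        · rw [hσ]; simp only [h, if_false, Finset.card_insert_of_notMem h]
          omega
        · rw [hσ]; simp only [h, if_false]
          exact hsub.trans (Finset.subset_insert _ _)
    · intro I _ J _ hIJ
      have := congrArg σ hIJ
      rwa [hinv, hinv] at this

lemma rep_le {h : Finset (Fin n) → ℝ≥0} (H : Rep n h) :
    ∑ I ∈ Finset.univ.filter (fun I : Finset (Fin n) => (n - I.card) % 2 = 1), h I ≤
    ∑ I ∈ Finset.univ.filter (fun I : Finset (Fin n) => (n - I.card) % 2 = 0), h I := by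
  obtain ⟨c, hc⟩ := H
  simp only [hc]
  rw [Finset.sum_comm, Finset.sum_comm
    (s := Finset.univ.filter (fun I : Finset (Fin n) => (n - I.card) % 2 = 0))]
  refine Finset.sum_le_sum fun S _ => ?_
  rw [← Finset.mul_sum, ← Finset.mul_sum]
  refine mul_le_mul_right ?_ (c S)
  rw [Finset.sum_boole, Finset.sum_boole, Finset.filter_filter, Finset.filter_filter]
  exact_mod_cast card_parity S

end PrestableAux

/-- If a matrix `f` indexed by finite multisets over `|X|` and elements of `|Y|`
sends every clique `x ∈ P(X)` to a clique `f · x! ∈ P(Y)`, then the induced map is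
pre-stable: all alternating higher-order differences are non-negative, i.e. the odd
part is dominated by the even part. -/

theorem pcoh_morphism_prestable {A B : Type*} [Countable A] [Countable B]
    (X : PCS A) (Y : PCS B) (f : Multiset A → B → ℝ≥0)
    (hf : ∀ x ∈ X.P, ∃ y ∈ Y.P, ∀ b : B, appF f x b = (y b : ℝ≥0∞)) :
    ∀ (n : ℕ) (x : A → ℝ≥0) (u : Fin n → A → ℝ≥0),
      (x + ∑ i : Fin n, u i) ∈ X.P → ∀ b : B,
      ∑ I ∈ Finset.univ.filter (fun I : Finset (Fin n) => (n - I.card) % 2 = 1),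
          appF f (x + ∑ i ∈ I, u i) b ≤
      ∑ I ∈ Finset.univ.filter (fun I : Finset (Fin n) => (n - I.card) % 2 = 0),
          appF f (x + ∑ i ∈ I, u i) b := by
  intro n x u _hx b
  simp only [appF]
  rw [← Summable.tsum_finsetSum (fun I _ => ENNReal.summable), ← Summable.tsum_finsetSum (fun I _ => ENNReal.summable)]
  refine ENNReal.tsum_le_tsum fun μ => ?_
  have heq : ∀ I : Finset (Fin n),
      ((x + ∑ i ∈ I, u i) : A → ℝ≥0) = fun a => x a + ∑ i ∈ I, u i a := by
    intro I; funext a; simp [Finset.sum_apply]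
  simp only [heq, ← Finset.mul_sum]
  refine mul_le_mul_right ?_ _
  rw [← ENNReal.coe_finset_sum, ← ENNReal.coe_finset_sum, ENNReal.coe_le_coe]
  exact PrestableAux.rep_le (PrestableAux.rep_monomial x u μ)
end
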